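/- Let φ be an inner function such that the radial boundary values of φ' are essentially bounded on ∂𝔻 (equivalently φ' ∈ H^∞(𝔻)). Then φ is a finite Blaschke product. -/

import Mathlib

open Complex Filter Set MeasureTheory Topology

/-- The open unit disk in ℂ. -/
noncomputable def unitDisk : Set ℂ := Metric.ball 0 1

/-- The α-hyperbolic distortion of φ at z. -/
noncomputable def tau (φ : ℂ → ℂ) (α : ℝ) (z : ℂ) : ℝ :=
  (1 - ‖z‖ ^ 2) ^ α * ‖deriv φ z‖ /
    (1 - ‖φ z‖ ^ 2) ^ α

/-- The Stolz (non-tangential) region at ζ with aperture γ. -/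
noncomputable def stolz (γ : ℝ) (ζ : ℂ) : Set ℂ :=
  {z ∈ unitDisk | ‖ζ - z‖ ≤ γ * (1 - ‖z‖ ^ 2)}

/-- φ is a finite Blaschke product on the unit disk. -/
def IsFiniteBlaschke (φ : ℂ → ℂ) : Prop :=
  ∃ (n : ℕ) (l : ℂ) (a : Fin n → ℂ), ‖l‖ = 1 ∧
    (∀ k, ‖a k‖ < 1) ∧
    ∀ z ∈ unitDisk, φ z = l * ∏ k, (a k - z) / (1 - (starRingEnd ℂ) (a k) * z)

/-! ### Auxiliary lemmas -/

theorem Blaschke.denom_ne {a z : ℂ} (ha : ‖a‖ < 1) (hz : ‖z‖ ≤ 1) :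
    1 - (starRingEnd ℂ) a * z ≠ 0 := by
  intro h
  have h2 : (starRingEnd ℂ) a * z = 1 := by linear_combination -h
  have := congrArg (‖·‖) h2
  rw [norm_mul, norm_one, Complex.norm_conj] at this
  nlinarith [norm_nonneg z, norm_nonneg a]

theorem Blaschke.abs_denom {a z : ℂ} (hz : ‖z‖ = 1) :
    ‖1 - (starRingEnd ℂ) a * z‖ = ‖a - z‖ := by
  have h1 : z * (starRingEnd ℂ) z = 1 := by
    rw [Complex.mul_conj]; norm_cast; rw [← Complex.sq_norm, hz]; norm_num
  have h2 : 1 - (starRingEnd ℂ) a * z = z * (starRingEnd ℂ) (z - a) := by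
    rw [map_sub]; linear_combination -h1
  rw [h2, norm_mul, hz, one_mul, Complex.norm_conj, norm_sub_rev]

theorem IsFiniteBlaschke.congr {f g : ℂ → ℂ} (h : IsFiniteBlaschke g)
    (he : ∀ z ∈ unitDisk, f z = g z) : IsFiniteBlaschke f := by
  obtain ⟨n, l, a, h1, h2, h3⟩ := h
  exact ⟨n, l, a, h1, h2, fun z hz => (he z hz).trans (h3 z hz)⟩

theorem IsFiniteBlaschke.mul_factor {ψ f : ℂ → ℂ} {a : ℂ} (ha : ‖a‖ < 1)
    (hψ : IsFiniteBlaschke ψ)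
    (h : ∀ z ∈ unitDisk, f z = (a - z) / (1 - (starRingEnd ℂ) a * z) * ψ z) :
    IsFiniteBlaschke f := by
  obtain ⟨n, l, b, h1, h2, h3⟩ := hψ
  refine ⟨n + 1, l, Fin.cons a b, h1, ?_, fun z hz => ?_⟩
  · intro k
    refine Fin.cases ?_ ?_ k
    · simpa using ha
    · intro i; simpa using h2 i
  · rw [h z hz, h3 z hz, Fin.prod_univ_succ]
    simp only [Fin.cons_zero, Fin.cons_succ]
    ring

theorem IsFiniteBlaschke.mul_pow_factor {ψ : ℂ → ℂ} {a : ℂ} (ha : ‖a‖ < 1)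
    (hψ : IsFiniteBlaschke ψ) (n : ℕ) {f : ℂ → ℂ}
    (h : ∀ z ∈ unitDisk, f z = ((a - z) / (1 - (starRingEnd ℂ) a * z)) ^ n * ψ z) :
    IsFiniteBlaschke f := by
  induction n generalizing f with
  | zero => exact hψ.congr (fun z hz => by simpa using h z hz)
  | succ m ih =>
      have hm : IsFiniteBlaschke (fun z => ((a - z) / (1 - (starRingEnd ℂ) a * z)) ^ m * ψ z) :=
        ih (fun z _ => rfl)
      exact hm.mul_factor ha (fun z hz => by rw [h z hz, pow_succ]; ring)

/-- A zero-free analytic function on the disk, continuous up to the boundary with unimodular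
boundary values, is a unimodular constant. -/
theorem Blaschke.nozero_case {f : ℂ → ℂ} (hD : DiffContOnCl ℂ f (Metric.ball 0 1))
    (hb : ∀ z : ℂ, ‖z‖ = 1 → ‖f z‖ = 1)
    (hZ : ∀ z ∈ Metric.ball (0:ℂ) 1, f z ≠ 0) : IsFiniteBlaschke f := by
  have hcl : closure (Metric.ball (0:ℂ) 1) = Metric.closedBall 0 1 := closure_ball 0 one_ne_zero
  have hfrb : ∀ z ∈ frontier (Metric.ball (0:ℂ) 1), ‖f z‖ = 1 := by
    intro z hz
    rw [frontier_ball 0 one_ne_zero, mem_sphere_iff_norm, sub_zero] at hz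
    exact hb z hz
  have h1 : ∀ z ∈ Metric.closedBall (0:ℂ) 1, ‖f z‖ ≤ 1 := by
    intro z hz
    rw [← hcl] at hz
    exact Complex.norm_le_of_forall_mem_frontier_norm_le Metric.isBounded_ball hD
      (fun w hw => (hfrb w hw).le) hz
  have hne : ∀ z ∈ Metric.closedBall (0:ℂ) 1, f z ≠ 0 := by
    intro z hz
    rcases lt_or_eq_of_le (mem_closedBall_zero_iff.mp hz) with h | h
    · exact hZ z (mem_ball_zero_iff.mpr h)
    · intro h0
      have := hb z h
      rw [h0] at this; simp at this
  have hne' : ∀ z ∈ closure (Metric.ball (0:ℂ) 1), f z ≠ 0 := fun z hz => hne z (hcl ▸ hz)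
  have hDi : DiffContOnCl ℂ (fun z => (f z)⁻¹) (Metric.ball 0 1) :=
    ⟨hD.differentiableOn.inv hZ, hD.continuousOn.inv₀ hne'⟩
  have h2 : ∀ z ∈ Metric.closedBall (0:ℂ) 1, ‖f z‖ = 1 := by
    intro z hz
    refine le_antisymm (h1 z hz) ?_
    have : ‖(f z)⁻¹‖ ≤ 1 := by
      rw [← hcl] at hz
      refine Complex.norm_le_of_forall_mem_frontier_norm_le Metric.isBounded_ball hDi ?_ hz
      intro w hw
      have : ‖f w‖ = 1 := hfrb w hw
      simp only [norm_inv, this, inv_one, le_refl]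
    rw [norm_inv] at this
    have h0 : ‖f z‖ ≠ 0 := by simpa using hne z hz
    rw [inv_le_one_iff₀] at this
    rcases this with h | h
    · exact absurd (le_antisymm h (norm_nonneg _)) h0
    · exact h
  have han : AnalyticOnNhd ℂ f (Metric.ball 0 1) :=
    hD.differentiableOn.analyticOnNhd Metric.isOpen_ball
  rcases han.is_constant_or_isOpen (convex_ball 0 1).isPreconnected with ⟨v, hv⟩ | hopen
  · refine ⟨0, v, fun _ => 0, ?_, fun k => k.elim0, fun z hz => ?_⟩
    · rw [← hv 0 (Metric.mem_ball_self one_pos)]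
      exact h2 0 (Metric.mem_closedBall_self one_pos.le)
    · rw [hv z hz]; simp
  · exfalso
    have himg : IsOpen (f '' Metric.ball 0 1) := hopen _ subset_rfl Metric.isOpen_ball
    have hmem : f 0 ∈ f '' Metric.ball 0 1 := ⟨0, Metric.mem_ball_self one_pos, rfl⟩
    obtain ⟨ε, hε, hball⟩ := Metric.isOpen_iff.mp himg _ hmem
    set δ := min ε 1 with hδ
    have hδ0 : 0 < δ := lt_min hε one_pos
    have habs0 : ‖f 0‖ = 1 := h2 0 (Metric.mem_closedBall_self one_pos.le)
    have hw : (1 - (δ/2 : ℝ)) * f 0 ∈ Metric.ball (f 0) ε := by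
      rw [Metric.mem_ball, Complex.dist_eq]
      have : ((1 - (δ/2 : ℝ)) : ℂ) * f 0 - f 0 = -((δ/2 : ℝ) : ℂ) * f 0 := by
        push_cast; ring
      rw [this, norm_mul, habs0, mul_one, norm_neg, Complex.norm_real, Real.norm_eq_abs,
        abs_of_pos (by linarith)]
      have : δ ≤ ε := min_le_left _ _
      linarith
    obtain ⟨z, hz, hfz⟩ := hball hw
    have h2z : ‖f z‖ = 1 := h2 z (Metric.ball_subset_closedBall hz)
    rw [hfz, norm_mul, habs0, mul_one,
      show (1 - ((δ/2:ℝ)):ℂ) = ((1 - δ/2 : ℝ) : ℂ) by push_cast; ring,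
      Complex.norm_real, Real.norm_eq_abs] at h2z
    have : δ ≤ 1 := min_le_right _ _
    rw [abs_of_pos (by linarith)] at h2z
    linarith

theorem Blaschke.not_eventually_zero {f : ℂ → ℂ} (hD : DiffContOnCl ℂ f (Metric.ball 0 1))
    (hb : ∀ z : ℂ, ‖z‖ = 1 → ‖f z‖ = 1) {a : ℂ}
    (ha : a ∈ Metric.ball (0:ℂ) 1) : ¬ (∀ᶠ z in 𝓝 a, f z = 0) := by
  intro hev
  have han : AnalyticOnNhd ℂ f (Metric.ball 0 1) :=
    hD.differentiableOn.analyticOnNhd Metric.isOpen_ball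
  have hzero : EqOn f 0 (Metric.ball 0 1) :=
    han.eqOn_zero_of_preconnected_of_eventuallyEq_zero (convex_ball 0 1).isPreconnected ha hev
  have hcont : ContinuousWithinAt f (closure (Metric.ball (0:ℂ) 1)) 1 := by
    refine hD.continuousOn.continuousWithinAt ?_
    rw [closure_ball (0:ℂ) one_ne_zero]
    simp [Metric.mem_closedBall]
  have t0 : Tendsto (fun r : ℝ => (r : ℂ)) (𝓝[<] (1:ℝ)) (𝓝[closure (Metric.ball (0:ℂ) 1)] 1) := by
    refine tendsto_nhdsWithin_of_tendsto_nhds_of_eventually_within _ ?_ ?_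
    · exact (Complex.continuous_ofReal.tendsto 1).mono_left nhdsWithin_le_nhds
    · filter_upwards [Ioo_mem_nhdsLT_of_mem (show (1:ℝ) ∈ Ioc 0 1 by norm_num)] with r hr
      refine subset_closure ?_
      rw [mem_ball_zero_iff]
      simpa using abs_lt.mpr ⟨by linarith [hr.1], hr.2⟩
  have t1 : Tendsto (fun r : ℝ => f ((r : ℂ))) (𝓝[<] (1:ℝ)) (𝓝 (f 1)) := hcont.tendsto.comp t0
  have t2 : Tendsto (fun r : ℝ => f ((r : ℂ))) (𝓝[<] (1:ℝ)) (𝓝 0) := by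
    refine Tendsto.congr' ?_ tendsto_const_nhds
    filter_upwards [Ioo_mem_nhdsLT_of_mem (show (1:ℝ) ∈ Ioc 0 1 by norm_num)] with r hr
    refine (hzero ?_).symm
    rw [mem_ball_zero_iff]
    simpa using abs_lt.mpr ⟨by linarith [hr.1], hr.2⟩
  have hf1 : f 1 = 0 := tendsto_nhds_unique t1 t2
  have := hb 1 (by simp)
  rw [hf1] at this
  simp at this

theorem Blaschke.zeros_finite {f : ℂ → ℂ} (hD : DiffContOnCl ℂ f (Metric.ball 0 1))
    (hb : ∀ z : ℂ, ‖z‖ = 1 → ‖f z‖ = 1) :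
    {z ∈ Metric.ball (0:ℂ) 1 | f z = 0}.Finite := by
  set Z := {z ∈ Metric.ball (0:ℂ) 1 | f z = 0} with hZ
  have hcl : closure (Metric.ball (0:ℂ) 1) = Metric.closedBall 0 1 := closure_ball 0 one_ne_zero
  have hZ' : Z = Metric.closedBall (0:ℂ) 1 ∩ f ⁻¹' {0} := by
    ext z
    simp only [hZ, mem_setOf_eq, mem_inter_iff, mem_preimage, mem_singleton_iff]
    constructor
    · rintro ⟨h1, h2⟩; exact ⟨Metric.ball_subset_closedBall h1, h2⟩
    · rintro ⟨h1, h2⟩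
      refine ⟨?_, h2⟩
      rcases lt_or_eq_of_le (mem_closedBall_zero_iff.mp h1) with h | h
      · exact mem_ball_zero_iff.mpr h
      · exfalso; have := hb z h; rw [h2] at this; simp at this
  have hclosed : IsClosed Z := by
    rw [hZ']
    refine ContinuousOn.preimage_isClosed_of_isClosed ?_ Metric.isClosed_closedBall isClosed_singleton
    rw [← hcl]; exact hD.continuousOn
  have hcompact : IsCompact Z := by
    refine (isCompact_closedBall (0:ℂ) 1).of_isClosed_subset hclosed ?_
    rw [hZ']; exact inter_subset_left
  refine hcompact.finite ?_
  rw [isDiscrete_iff_discreteTopology, discreteTopology_subtype_iff]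
  intro x hx
  have hxb : x ∈ Metric.ball (0:ℂ) 1 := hx.1
  have han : AnalyticAt ℂ f x :=
    (hD.differentiableOn.analyticOnNhd Metric.isOpen_ball) x hxb
  rcases han.eventually_eq_zero_or_eventually_ne_zero with h | h
  · exact absurd h (Blaschke.not_eventually_zero hD hb hxb)
  · rw [← empty_mem_iff_bot, mem_inf_principal]
    filter_upwards [h] with z hz
    intro hzZ
    exact absurd hzZ.2 hz

theorem Blaschke.factor_step {f : ℂ → ℂ} (hD : DiffContOnCl ℂ f (Metric.ball 0 1))
    (hb : ∀ z : ℂ, ‖z‖ = 1 → ‖f z‖ = 1) {a : ℂ}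
    (ha : a ∈ Metric.ball (0:ℂ) 1) (hfa : f a = 0) :
    ∃ (n : ℕ) (ψ : ℂ → ℂ), 0 < n ∧ DiffContOnCl ℂ ψ (Metric.ball 0 1) ∧
      (∀ z : ℂ, ‖z‖ = 1 → ‖ψ z‖ = 1) ∧
      (∀ z ∈ Metric.ball (0:ℂ) 1,
        f z = ((a - z) / (1 - (starRingEnd ℂ) a * z)) ^ n * ψ z) ∧
      (∀ z ∈ Metric.ball (0:ℂ) 1, (ψ z = 0 ↔ (f z = 0 ∧ z ≠ a))) := by
  have hnev : ∀ b ∈ Metric.ball (0:ℂ) 1, ¬ (∀ᶠ z in 𝓝 b, f z = 0) :=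
    fun b hbb => Blaschke.not_eventually_zero hD hb hbb
  have haa : ‖a‖ < 1 := mem_ball_zero_iff.mp ha
  have hcl : closure (Metric.ball (0:ℂ) 1) = Metric.closedBall 0 1 := closure_ball 0 one_ne_zero
  have hA : AnalyticAt ℂ f a :=
    (hD.differentiableOn.analyticOnNhd Metric.isOpen_ball) a ha
  obtain ⟨p, hp⟩ := hA
  have hp0 : p ≠ 0 := fun h => hnev a ha (hp.locally_zero_iff.mpr h)
  set n := p.order with hn
  set g := (Function.swap dslope a)^[n] f with hg
  have hval : ∀ k : ℕ, ((Function.swap dslope a)^[k] f) a = p.coeff k := by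
    intro k
    have h1 := (hp.has_fpower_series_iterate_dslope_fslope k).coeff_zero 1
    have h2 := FormalMultilinearSeries.coeff_iterate_fslope (p := p) k 0
    rw [zero_add] at h2
    rw [← h2]
    exact h1.symm
  have hn0 : 0 < n := by
    rcases Nat.eq_zero_or_pos n with h | h
    swap
    · exact h
    · exfalso
      have := hval 0
      simp only [Function.iterate_zero, id_eq] at this
      have hc0 : p.coeff 0 = 0 := by rw [← this, hfa]
      rw [FormalMultilinearSeries.coeff_eq_zero] at hc0
      exact (p.order_eq_zero_iff hp0).mp h hc0
  have hglob : ∀ k, k ≤ n → ∀ z, f z = (z - a) ^ k * ((Function.swap dslope a)^[k] f) z := by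
    intro k
    induction k with
    | zero => intro _ z; simp
    | succ m ih =>
      intro hm z
      have hva : ((Function.swap dslope a)^[m] f) a = 0 := by
        rw [hval m, FormalMultilinearSeries.coeff_eq_zero]
        exact p.apply_eq_zero_of_lt_order hm
      have hds := sub_smul_dslope ((Function.swap dslope a)^[m] f) a z
      rw [smul_eq_mul, hva, sub_zero] at hds
      calc f z = (z - a) ^ m * ((Function.swap dslope a)^[m] f) z := ih (Nat.le_of_succ_le hm) z
        _ = (z - a) ^ m * ((z - a) * dslope ((Function.swap dslope a)^[m] f) a z) := by
            rw [hds]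
        _ = (z - a) ^ (m + 1) * ((Function.swap dslope a)^[m + 1] f) z := by
            rw [Function.iterate_succ_apply']
            unfold Function.swap
            ring
  have hfg : ∀ z, f z = (z - a) ^ n * g z := hglob n le_rfl
  have hga : g a ≠ 0 := hp.iterate_dslope_fslope_ne_zero hp0
  have hiter : ∀ k : ℕ, DifferentiableOn ℂ ((Function.swap dslope a)^[k] f) (Metric.ball 0 1) ∧
      ContinuousOn ((Function.swap dslope a)^[k] f) (Metric.closedBall 0 1) := by
    intro k
    induction k with
    | zero => exact ⟨hD.differentiableOn, hcl ▸ hD.continuousOn⟩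
    | succ m ih =>
      rw [Function.iterate_succ_apply']
      constructor
      · exact (differentiableOn_dslope (Metric.isOpen_ball.mem_nhds ha)).mpr ih.1
      · exact (continuousOn_dslope
          (Filter.mem_of_superset (Metric.isOpen_ball.mem_nhds ha)
            Metric.ball_subset_closedBall)).mpr
          ⟨ih.2, ih.1.differentiableAt (Metric.isOpen_ball.mem_nhds ha)⟩
  set ψ : ℂ → ℂ := fun z => (-(1 - (starRingEnd ℂ) a * z)) ^ n * g z with hψ
  have hpoly : Differentiable ℂ (fun z : ℂ => (-(1 - (starRingEnd ℂ) a * z)) ^ n) := by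
    apply Differentiable.pow
    apply Differentiable.neg
    apply Differentiable.sub
    · exact differentiable_const 1
    · exact (differentiable_const _).mul differentiable_id
  refine ⟨n, ψ, hn0, ⟨hpoly.differentiableOn.mul (hiter n).1,
      (hpoly.continuous.continuousOn).mul (hcl ▸ (hiter n).2)⟩, ?_, ?_, ?_⟩
  · intro z hz
    have h1 : ‖f z‖ = 1 := hb z hz
    rw [hfg z, norm_mul, norm_pow] at h1
    rw [hψ]
    simp only
    rw [norm_mul, norm_pow, norm_neg, Blaschke.abs_denom hz, norm_sub_rev]
    exact h1
  · intro z hz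
    have hzle : ‖z‖ ≤ 1 := (mem_ball_zero_iff.mp hz).le
    have hden : 1 - (starRingEnd ℂ) a * z ≠ 0 := Blaschke.denom_ne haa hzle
    rw [hψ]
    simp only
    rw [hfg z, ← mul_assoc, ← mul_pow]
    congr 2
    linear_combination (a - z) * mul_inv_cancel₀ hden
  · intro z hz
    have hzle : ‖z‖ ≤ 1 := (mem_ball_zero_iff.mp hz).le
    have hden : 1 - (starRingEnd ℂ) a * z ≠ 0 := Blaschke.denom_ne haa hzle
    have hfac : (-(1 - (starRingEnd ℂ) a * z)) ^ n ≠ 0 := pow_ne_zero _ (neg_ne_zero.mpr hden)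
    rw [hψ]
    simp only [mul_eq_zero, hfac, false_or]
    constructor
    · intro hgz
      have hzna : z ≠ a := by
        intro h; rw [h] at hgz; exact hga hgz
      refine ⟨?_, hzna⟩
      rw [hfg z, hgz, mul_zero]
    · rintro ⟨hfz, hzna⟩
      have := hfg z
      rw [hfz] at this
      have hpow : (z - a) ^ n ≠ 0 := pow_ne_zero _ (sub_ne_zero.mpr hzna)
      exact (mul_eq_zero.mp this.symm).resolve_left hpow

/-- Main induction: bounded zero count implies finite Blaschke. -/
theorem Blaschke.key (k : ℕ) : ∀ f : ℂ → ℂ, DiffContOnCl ℂ f (Metric.ball 0 1) →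
    (∀ z : ℂ, ‖z‖ = 1 → ‖f z‖ = 1) →
    {z ∈ Metric.ball (0:ℂ) 1 | f z = 0}.encard ≤ (k : ℕ∞) →
    IsFiniteBlaschke f := by
  induction k with
  | zero =>
    intro f hD hb hcard
    have hZ : {z ∈ Metric.ball (0:ℂ) 1 | f z = 0} = ∅ := by
      rw [← Set.encard_eq_zero]
      simpa using hcard
    refine Blaschke.nozero_case hD hb ?_
    intro z hz hfz
    have : z ∈ ({z ∈ Metric.ball (0:ℂ) 1 | f z = 0} : Set ℂ) := ⟨hz, hfz⟩
    rw [hZ] at this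
    exact this
  | succ m ih =>
    intro f hD hb hcard
    rcases Set.eq_empty_or_nonempty {z ∈ Metric.ball (0:ℂ) 1 | f z = 0} with hZe | ⟨a, haZ⟩
    · refine Blaschke.nozero_case hD hb ?_
      intro z hz hfz
      have : z ∈ ({z ∈ Metric.ball (0:ℂ) 1 | f z = 0} : Set ℂ) := ⟨hz, hfz⟩
      rw [hZe] at this
      exact this
    · obtain ⟨ha, hfa⟩ := haZ
      obtain ⟨n, ψ, hn0, hψD, hψb, hψid, hψz⟩ := Blaschke.factor_step hD hb ha hfa
      have hZψ : {z ∈ Metric.ball (0:ℂ) 1 | ψ z = 0}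
          = {z ∈ Metric.ball (0:ℂ) 1 | f z = 0} \ {a} := by
        ext z
        simp only [mem_setOf_eq, mem_diff, mem_singleton_iff]
        constructor
        · rintro ⟨hz, hψ0⟩
          obtain ⟨h1, h2⟩ := (hψz z hz).mp hψ0
          exact ⟨⟨hz, h1⟩, h2⟩
        · rintro ⟨⟨hz, h1⟩, h2⟩
          exact ⟨hz, (hψz z hz).mpr ⟨h1, h2⟩⟩
      have hcardψ : {z ∈ Metric.ball (0:ℂ) 1 | ψ z = 0}.encard ≤ (m : ℕ∞) := by
        rw [hZψ]
        have hmemZ : a ∈ {z ∈ Metric.ball (0:ℂ) 1 | f z = 0} := ⟨ha, hfa⟩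
        have h1 := Set.encard_diff_singleton_add_one hmemZ
        have h2 : ({z ∈ Metric.ball (0:ℂ) 1 | f z = 0} \ {a}).encard + 1 ≤ (m : ℕ∞) + 1 := by
          rw [h1]
          rw [show ((m:ℕ)+1 : ℕ∞) = ((m+1 : ℕ) : ℕ∞) by push_cast; ring] at *
          exact hcard
        exact (WithTop.add_le_add_iff_right (by simp : (1:ℕ∞) ≠ ⊤)).mp h2
      have hψB : IsFiniteBlaschke ψ := ih ψ hψD hψb hcardψ
      exact hψB.mul_pow_factor (mem_ball_zero_iff.mp ha) n (fun z hz => hψid z hz)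

theorem stmt_9 (φ : ℂ → ℂ) (hd : DifferentiableOn ℂ φ unitDisk)
    (hm : Set.MapsTo φ unitDisk unitDisk)
    (hinner : ∀ᵐ (θ : ℝ) ∂(volume : Measure ℝ),
      Tendsto (fun r : ℝ => ‖φ ((r : ℂ) * Complex.exp ((θ : ℂ) * Complex.I))‖)
        (𝓝[<] 1) (𝓝 1))
    (hbd : ∃ M : ℝ, ∀ z ∈ unitDisk, ‖deriv φ z‖ ≤ M) :
    IsFiniteBlaschke φ := by
  classical
  obtain ⟨M, hM⟩ := hbd
  have hball : unitDisk = Metric.ball (0:ℂ) 1 := rfl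
  have hd' : DifferentiableOn ℂ φ (Metric.ball (0:ℂ) 1) := hd
  -- φ is Lipschitz on the ball
  have hlip : LipschitzOnWith (Real.toNNReal M) φ (Metric.ball (0:ℂ) 1) := by
    refine LipschitzOnWith.of_dist_le_mul ?_
    intro x hx y hy
    have h1 : ‖φ x - φ y‖ ≤ M * ‖x - y‖ := by
      refine Convex.norm_image_sub_le_of_norm_deriv_le
        (fun w hw => hd'.differentiableAt (Metric.isOpen_ball.mem_nhds hw))
        (fun w hw => ?_) (convex_ball 0 1) hy hx
      exact hM w hw
    rw [dist_eq_norm, dist_eq_norm]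
    calc ‖φ x - φ y‖ ≤ M * ‖x - y‖ := h1
      _ ≤ (Real.toNNReal M : ℝ) * ‖x - y‖ := by
          have : M ≤ (Real.toNNReal M : ℝ) := Real.le_coe_toNNReal M
          have h0 : (0:ℝ) ≤ ‖x - y‖ := norm_nonneg _
          nlinarith
  -- extend φ to a continuous F on all of ℂ
  obtain ⟨F, hFlip, hFeq⟩ := hlip.extend_finite_dimension
  have hFc : Continuous F := hFlip.continuous
  have hDF : DiffContOnCl ℂ F (Metric.ball 0 1) := by
    refine ⟨?_, hFc.continuousOn⟩
    exact hd'.congr (fun x hx => (hFeq hx).symm)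
  -- boundary modulus 1 at a.e. angle
  have hae : ∀ᵐ θ : ℝ ∂(volume : Measure ℝ),
      ‖F (Complex.exp ((θ:ℂ) * Complex.I))‖ = 1 := by
    filter_upwards [hinner] with θ hθ
    set e : ℂ := Complex.exp ((θ:ℂ) * Complex.I) with he
    have habse : ‖e‖ = 1 := Complex.norm_exp_ofReal_mul_I θ
    have t1 : Tendsto (fun r : ℝ => F ((r:ℂ) * e)) (𝓝[<] (1:ℝ)) (𝓝 (F e)) := by
      have tc : Tendsto (fun r : ℝ => (r:ℂ) * e) (𝓝[<] (1:ℝ)) (𝓝 e) := by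
        have h : Continuous (fun r : ℝ => (r:ℂ) * e) := by continuity
        have := h.tendsto (1:ℝ)
        simp only [Complex.ofReal_one, one_mul] at this
        exact this.mono_left nhdsWithin_le_nhds
      exact (hFc.tendsto e).comp tc
    have t2 : Tendsto (fun r : ℝ => ‖φ ((r:ℂ) * e)‖) (𝓝[<] (1:ℝ))
        (𝓝 (‖F e‖)) := by
      refine Tendsto.congr' ?_ ((continuous_norm.tendsto (F e)).comp t1)
      filter_upwards [Ioo_mem_nhdsLT_of_mem (show (1:ℝ) ∈ Ioc 0 1 by norm_num)] with r hr
      have hmem : (r:ℂ) * e ∈ Metric.ball (0:ℂ) 1 := by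
        rw [mem_ball_zero_iff, norm_mul, habse, mul_one, Complex.norm_real, Real.norm_eq_abs]
        rw [abs_of_pos hr.1]
        exact hr.2
      simp only [Function.comp_apply]
      rw [hFeq hmem]
    exact tendsto_nhds_unique t2 hθ
  -- the set where boundary modulus is 1 is dense
  set S : Set ℝ := {θ : ℝ | ‖F (Complex.exp ((θ:ℂ) * Complex.I))‖ = 1} with hS
  have hSdense : Dense S := by
    rw [dense_iff_inter_open]
    intro U hU hUne
    by_contra h
    rw [not_nonempty_iff_eq_empty] at h
    have hsub : U ⊆ Sᶜ := by
      intro x hx hxS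
      have : x ∈ U ∩ S := ⟨hx, hxS⟩
      rw [h] at this
      exact this
    have h0 : volume Sᶜ = 0 := by
      have h1 : ∀ᵐ θ : ℝ ∂(volume : Measure ℝ), θ ∈ S := hae
      rw [MeasureTheory.ae_iff] at h1
      exact h1
    have := measure_mono (μ := (volume : Measure ℝ)) hsub
    rw [h0] at this
    exact absurd (le_antisymm this zero_le) (hU.measure_pos volume hUne).ne'
  have hb : ∀ z : ℂ, ‖z‖ = 1 → ‖F z‖ = 1 := by
    have hcontS : Continuous (fun θ : ℝ => ‖F (Complex.exp ((θ:ℂ) * Complex.I))‖) := by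
      exact continuous_norm.comp (hFc.comp (Complex.continuous_exp.comp
        (Complex.continuous_ofReal.mul continuous_const)))
    have heq : (fun θ : ℝ => ‖F (Complex.exp ((θ:ℂ) * Complex.I))‖)
        = fun _ => (1:ℝ) :=
      Continuous.ext_on hSdense hcontS continuous_const (fun θ hθ => hθ)
    intro z hz
    have hzz : Complex.exp ((Complex.arg z : ℂ) * Complex.I) = z := by
      have := Complex.norm_mul_exp_arg_mul_I z
      rw [hz, Complex.ofReal_one, one_mul] at this
      exact this
    have := congrFun heq (Complex.arg z)
    rw [hzz] at this
    exact this
  -- apply the main result to F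
  have hfin : {z ∈ Metric.ball (0:ℂ) 1 | F z = 0}.Finite := Blaschke.zeros_finite hDF hb
  have hFB : IsFiniteBlaschke F := by
    refine Blaschke.key hfin.toFinset.card F hDF hb ?_
    rw [hfin.encard_eq_coe_toFinset_card]
  exact hFB.congr (fun z hz => hFeq hz)
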